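/- Let u be a C^7 function on [0,L] satisfying u(0) = u(L) = D^3u(L) = 0, D^4u(0) = a_{42} D^2u(0), D^5u(0) = a_{51} Du(0), D^4u(L) = b_{42} D^2u(L), D^5u(L) = b_{51} Du(L), with b_{51} < −1/2, b_{42} > 1/2, a_{51} > 1/2, a_{42} < 1/2. Then ∫_0^L (D^3u − D^5u + D^7u)(x) u(x) dx ≥ (−b_{51} − 1/2)(Du(L))^2 + (b_{42} − 1/2)(D^2u(L))^2 + (a_{51} − 1/2)(Du(0))^2 + (1/2 − a_{42})(D^2u(0))^2 + (1/4)(D^3u(0))^2 ≥ 0. -/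

import Mathlib

noncomputable def D (L : ℝ) (u : ℝ → ℝ) (i : ℕ) (x : ℝ) : ℝ :=
  iteratedDerivWithin i u (Set.Icc 0 L) x

theorem stmt_13 (L : ℝ) (hL : 0 < L) (a42 a51 b42 b51 : ℝ)
    (ha42 : a42 < 1 / 2) (ha51 : 1 / 2 < a51) (hb42 : 1 / 2 < b42) (hb51 : b51 < -(1 / 2))
    (u : ℝ → ℝ) (hu : ContDiffOn ℝ 7 u (Set.Icc 0 L))
    (h0 : u 0 = 0) (hLv : u L = 0) (h3L : D L u 3 L = 0)
    (h40 : D L u 4 0 = a42 * D L u 2 0) (h50 : D L u 5 0 = a51 * D L u 1 0)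
    (h4L : D L u 4 L = b42 * D L u 2 L) (h5L : D L u 5 L = b51 * D L u 1 L) :
    (∫ x in (0:ℝ)..L, (D L u 3 x - D L u 5 x + D L u 7 x) * u x) ≥
      (-b51 - 1 / 2) * (D L u 1 L) ^ 2 + (b42 - 1 / 2) * (D L u 2 L) ^ 2 +
        (a51 - 1 / 2) * (D L u 1 0) ^ 2 + (1 / 2 - a42) * (D L u 2 0) ^ 2 +
        (1 / 4) * (D L u 3 0) ^ 2 ∧
    (-b51 - 1 / 2) * (D L u 1 L) ^ 2 + (b42 - 1 / 2) * (D L u 2 L) ^ 2 +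
        (a51 - 1 / 2) * (D L u 1 0) ^ 2 + (1 / 2 - a42) * (D L u 2 0) ^ 2 +
        (1 / 4) * (D L u 3 0) ^ 2 ≥ 0 := by
  have hL' : (0:ℝ) ≤ L := hL.le
  have hud : UniqueDiffOn ℝ (Set.Icc (0:ℝ) L) := uniqueDiffOn_Icc hL
  set v : ℕ → ℝ → ℝ := D L u with hv
  have hc : ∀ i : ℕ, i ≤ 7 → ContinuousOn (v i) (Set.Icc 0 L) := fun i hi =>
    hu.continuousOn_iteratedDerivWithin (by exact_mod_cast hi) hud
  have hd : ∀ i : ℕ, i < 7 → ∀ x ∈ Set.Icc (0:ℝ) L,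
      HasDerivWithinAt (v i) (v (i+1) x) (Set.Icc 0 L) x := by
    intro i hi x hx
    have hdiff : DifferentiableOn ℝ (v i) (Set.Icc 0 L) :=
      hu.differentiableOn_iteratedDerivWithin (by exact_mod_cast hi) hud
    have h1 := (hdiff x hx).hasDerivWithinAt
    have h2 : v (i+1) x = derivWithin (v i) (Set.Icc 0 L) x :=
      by show iteratedDerivWithin (i+1) u (Set.Icc 0 L) x = derivWithin (iteratedDerivWithin i u (Set.Icc 0 L)) (Set.Icc 0 L) x; rw [iteratedDerivWithin_succ]
    rwa [h2]
  have hv0 : v 0 = u := by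
    funext x; simp [hv, D, iteratedDerivWithin_zero]
  set F : ℝ → ℝ := fun x => v 2 x * v 0 x - v 1 x * v 1 x / 2 - v 4 x * v 0 x
      + v 3 x * v 1 x - v 2 x * v 2 x / 2 + v 6 x * v 0 x - v 5 x * v 1 x
      + v 4 x * v 2 x - v 3 x * v 3 x / 2 with hF
  have hFd : ∀ x ∈ Set.Icc (0:ℝ) L,
      HasDerivWithinAt F ((v 3 x - v 5 x + v 7 x) * v 0 x) (Set.Icc 0 L) x := by
    intro x hx
    have h0' := hd 0 (by norm_num) x hx
    have h1' := hd 1 (by norm_num) x hx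
    have h2' := hd 2 (by norm_num) x hx
    have h3' := hd 3 (by norm_num) x hx
    have h4' := hd 4 (by norm_num) x hx
    have h5' := hd 5 (by norm_num) x hx
    have h6' := hd 6 (by norm_num) x hx
    have e := (((((((((h2'.mul h0').sub ((h1'.mul h1').div_const 2)).sub
      (h4'.mul h0')).add (h3'.mul h1')).sub ((h2'.mul h2').div_const 2)).add
      (h6'.mul h0')).sub (h5'.mul h1')).add (h4'.mul h2')).sub
      ((h3'.mul h3').div_const 2))
    refine e.congr_deriv ?_
    ring
  have hFc : ContinuousOn F (Set.Icc 0 L) := by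
    have c0 := hc 0 (by norm_num)
    have c1 := hc 1 (by norm_num)
    have c2 := hc 2 (by norm_num)
    have c3 := hc 3 (by norm_num)
    have c4 := hc 4 (by norm_num)
    have c5 := hc 5 (by norm_num)
    have c6 := hc 6 (by norm_num)
    exact (((((((((c2.mul c0).sub ((c1.mul c1).div_const 2)).sub
      (c4.mul c0)).add (c3.mul c1)).sub ((c2.mul c2).div_const 2)).add
      (c6.mul c0)).sub (c5.mul c1)).add (c4.mul c2)).sub
      ((c3.mul c3).div_const 2))
  have hIc : ContinuousOn (fun x => (v 3 x - v 5 x + v 7 x) * v 0 x) (Set.Icc 0 L) :=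
    (((hc 3 (by norm_num)).sub (hc 5 (by norm_num))).add (hc 7 le_rfl)).mul
      (hc 0 (by norm_num))
  have hInt : IntervalIntegrable (fun x => (v 3 x - v 5 x + v 7 x) * v 0 x)
      MeasureTheory.volume 0 L := by
    apply ContinuousOn.intervalIntegrable
    rwa [Set.uIcc_of_le hL']
  have hint : (∫ x in (0:ℝ)..L, (v 3 x - v 5 x + v 7 x) * v 0 x) = F L - F 0 := by
    apply intervalIntegral.integral_eq_sub_of_hasDeriv_right_of_le hL' hFc _ hInt
    intro x hx
    exact ((hFd x (Set.Ioo_subset_Icc_self hx)).hasDerivAt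
      (Icc_mem_nhds hx.1 hx.2)).hasDerivWithinAt
  have hu00 : v 0 0 = 0 := by rw [hv0]; exact h0
  have hu0L : v 0 L = 0 := by rw [hv0]; exact hLv
  have key : (∫ x in (0:ℝ)..L, (D L u 3 x - D L u 5 x + D L u 7 x) * u x)
      = F L - F 0 := by
    rw [← hint, hv0]
  constructor
  · rw [key, hF]
    simp only [hu00, hu0L, h3L, h4L, h5L, h40, h50]
    nlinarith [sq_nonneg (v 1 0 - v 3 0 / 2)]
  · nlinarith [sq_nonneg (v 1 L), sq_nonneg (v 2 L), sq_nonneg (v 1 0),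
      sq_nonneg (v 2 0), sq_nonneg (v 3 0),
      mul_nonneg (by linarith : (0:ℝ) ≤ -b51 - 1/2) (sq_nonneg (v 1 L)),
      mul_nonneg (by linarith : (0:ℝ) ≤ b42 - 1/2) (sq_nonneg (v 2 L)),
      mul_nonneg (by linarith : (0:ℝ) ≤ a51 - 1/2) (sq_nonneg (v 1 0)),
      mul_nonneg (by linarith : (0:ℝ) ≤ 1/2 - a42) (sq_nonneg (v 2 0))]
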